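/- arXiv:2012.02060 — 2 statements merged into one kernel-verified Lean document; each statement's English description precedes it below -/
import Mathlib

section
/- The multisimplicial Alexander–Whitney map is coassociative: (AW ⊗ id) ∘ AW = (id ⊗ AW) ∘ AW as maps C_*(X) → C_*(X) ⊗ C_*(X) ⊗ C_*(X). -/
open DirectSum
open scoped TensorProduct

noncomputable section

/-- A `k`-fold multisimplicial set: a contravariant functor from `Δ^k` to sets,
given on objects `v : Fin k → ℕ` and on morphisms, which are families of
monotone maps `Fin (v l + 1) →o Fin (w l + 1)`. -/
structure MSSet (k : ℕ) where
  X : (Fin k → ℕ) → Type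
  map : ∀ {v w : Fin k → ℕ}, (∀ l, Fin (v l + 1) →o Fin (w l + 1)) → X w → X v
  map_id : ∀ (v) (x : X v), map (v := v) (w := v) (fun _ => OrderHom.id) x = x
  map_comp : ∀ {u v w : Fin k → ℕ}
    (f : ∀ l, Fin (u l + 1) →o Fin (v l + 1)) (g : ∀ l, Fin (v l + 1) →o Fin (w l + 1))
    (x : X w), map (fun l => (g l).comp (f l)) x = map f (map g x)

variable {R : Type} [CommRing R] {k : ℕ}

/-- The monotone cast between `Fin`s of equal size. -/
def castOH {m n : ℕ} (h : m = n) : Fin m →o Fin n :=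
  ⟨Fin.cast h, fun _ _ hab => hab⟩

/-- The coface map `δ_t : [n] → [n+1]` (the monotone injection skipping `t`). -/
def δmap (n : ℕ) (t : Fin (n + 2)) : Fin (n + 1) →o Fin (n + 2) :=
  ⟨fun x => ⟨if (x : ℕ) < t then x else x + 1, by split <;> omega⟩, by
    intro a b h
    simp only [Fin.mk_le_mk]
    have h' : (a : ℕ) ≤ b := h
    split <;> split <;> omega⟩

/-- The codegeneracy map `σ_t : [n+1] → [n]` (the monotone surjection hitting `t` twice). -/
def σmap (n : ℕ) (t : Fin (n + 1)) : Fin (n + 2) →o Fin (n + 1) :=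
  ⟨fun x => ⟨if (x : ℕ) ≤ t then x else x - 1, by have := t.isLt; split <;> omega⟩, by
    intro a b h
    simp only [Fin.mk_le_mk]
    have h' : (a : ℕ) ≤ b := h
    split <;> split <;> omega⟩

/-- The family of monotone maps realizing the `t`-th coface in direction `j`:
a morphism from `v` to `Function.update v j (v j + 1)` in `Δ^k`. -/
def faceFam (v : Fin k → ℕ) (j : Fin k) (t : Fin (v j + 2)) :
    ∀ l, Fin (v l + 1) →o Fin (Function.update v j (v j + 1) l + 1) := fun l =>
  if h : l = j then by
    subst h
    exact (castOH (by rw [Function.update_self])).comp (δmap (v l) t)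
  else castOH (by rw [Function.update_of_ne h])

/-- The family of monotone maps realizing the `t`-th codegeneracy in direction `j`:
a morphism from `Function.update v j (v j + 1)` to `v` in `Δ^k`. -/
def degenFam (v : Fin k → ℕ) (j : Fin k) (t : Fin (v j + 1)) :
    ∀ l, Fin (Function.update v j (v j + 1) l + 1) →o Fin (v l + 1) := fun l =>
  if h : l = j then by
    subst h
    exact (σmap (v l) t).comp (castOH (by rw [Function.update_self]))
  else castOH (by rw [Function.update_of_ne h])

/-- `v` with the `j`-th entry decreased by one. -/
def predIdx (v : Fin k → ℕ) (j : Fin k) : Fin k → ℕ := Function.update v j (v j - 1)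

lemma predIdx_spec (v : Fin k → ℕ) (j : Fin k) (h : v j ≠ 0) :
    Function.update (predIdx v j) j (predIdx v j j + 1) = v := by
  funext m
  by_cases hm : m = j
  · subst hm; simp [predIdx]; omega
  · simp [predIdx, Function.update_of_ne hm]

/-- The sign `(-1)^(t + v 0 + ... + v (j-1))`. -/
def dsign (v : Fin k → ℕ) (j : Fin k) (t : ℕ) : ℤ :=
  (-1) ^ (t + ∑ m ∈ Finset.univ.filter (fun m => m < j), v m)

/-- Lattice paths from the origin to `v`, encoding `(v 0, ..., v (k-1))`-shuffles:
the function records the direction of each of the `∑ v l` unit moves. -/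
def Paths (v : Fin k → ℕ) : Type :=
  {c : Fin (∑ l, v l) → Fin k // ∀ l, (Finset.univ.filter (fun i => c i = l)).card = v l}

instance (v : Fin k → ℕ) : Fintype (Paths v) := by unfold Paths; infer_instance

/-- The sign of the shuffle associated to a lattice path: `(-1)^{number of inversions}`. -/
def pathSign {v : Fin k → ℕ} (c : Paths v) : ℤ :=
  (-1) ^ (Finset.univ.filter
    (fun p : Fin (∑ l, v l) × Fin (∑ l, v l) => p.1 < p.2 ∧ c.1 p.2 < c.1 p.1)).card

/-- The family of monotone maps `π_l : [∑ v] → [v l]` associated to a lattice path: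
`π_l (j)` counts the moves in direction `l` among the first `j` moves. -/
def pathFam (v : Fin k → ℕ) (c : Paths v) (l : Fin k) :
    Fin ((∑ m, v m) + 1) →o Fin (v l + 1) :=
  ⟨fun j => ⟨(Finset.univ.filter (fun i : Fin (∑ m, v m) => (i : ℕ) < (j : ℕ) ∧ c.1 i = l)).card, by
      have hle : (Finset.univ.filter (fun i : Fin (∑ m, v m) => (i : ℕ) < (j : ℕ) ∧ c.1 i = l)).card ≤
          (Finset.univ.filter (fun i => c.1 i = l)).card := by
        apply Finset.card_le_card
        intro x hx
        simp only [Finset.mem_filter, Finset.mem_univ, true_and] at hx ⊢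
        exact hx.2
      have := c.2 l
      omega⟩, by
    intro a b hab
    simp only [Fin.mk_le_mk]
    apply Finset.card_le_card
    intro x hx
    simp only [Finset.mem_filter, Finset.mem_univ, true_and] at hx ⊢
    have h' : (a : ℕ) ≤ b := hab
    exact ⟨by omega, hx.2⟩⟩


namespace MSSet

variable (K : MSSet k)

/-- Cast of multisimplices along an equality of multidegrees. -/
def cmap {v w : Fin k → ℕ} (h : v = w) : K.X w → K.X v :=
  K.map fun l => castOH (by rw [h])

variable (R) in
/-- The chain complex `C_*(K; R) = ⊕_v R⟨K_v⟩` of a multisimplicial set. -/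
abbrev ch := ⨁ v : (Fin k → ℕ), (K.X v →₀ R)

variable (R) in
/-- The generator of `C_*(K; R)` corresponding to a multisimplex. -/
def gen (v : Fin k → ℕ) (x : K.X v) : K.ch R :=
  DirectSum.lof R _ (fun v => K.X v →₀ R) v (Finsupp.single x 1)

variable (R) in
/-- The multisimplicial differential on `C_*(K; R)`. -/
def del : K.ch R →ₗ[R] K.ch R :=
  DirectSum.toModule R _ (K.ch R) fun v =>
    ∑ j : Fin k,
      if h : v j = 0 then 0
      else
        ∑ t : Fin (v j + 1),
          dsign v j t •
            ((DirectSum.lof R _ (fun v => K.X v →₀ R) (predIdx v j)) ∘ₗ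
              Finsupp.lmapDomain R R (fun x =>
                K.map (faceFam (predIdx v j) j
                    (Fin.cast (by rw [predIdx, Function.update_self]; omega) t))
                  (K.cmap (predIdx_spec v j h) x)))

variable (R) in
/-- The Koszul grading involution `x ↦ (-1)^{|x|} x`. -/
def koszul : K.ch R →ₗ[R] K.ch R :=
  DirectSum.toModule R _ (K.ch R) fun v =>
    ((-1 : ℤ) ^ (∑ l, v l)) • DirectSum.lof R _ (fun v => K.X v →₀ R) v

variable (R) in
/-- The differential on `C_*(K) ⊗ C_*(K)`, with Koszul signs. -/
def delT : (K.ch R ⊗[R] K.ch R) →ₗ[R] (K.ch R ⊗[R] K.ch R) :=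
  TensorProduct.map (K.del R) LinearMap.id + TensorProduct.map (K.koszul R) (K.del R)

end MSSet

/-- The front face inclusion `(F_{i_1}, ..., F_{i_k})`, `F_i(l) = l`. -/
def frontFam {v : Fin k → ℕ} (i : ∀ l, Fin (v l + 1)) :
    ∀ l, Fin ((i l : ℕ) + 1) →o Fin (v l + 1) := fun l =>
  ⟨fun m => ⟨(m : ℕ), by have h1 := m.isLt; have h2 := (i l).isLt; omega⟩,
    fun a b h => h⟩

/-- The back face inclusion `(B_{a_1-i_1}, ..., B_{a_k-i_k})`, `B_j(l) = l + a - j`. -/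
def backFam {v : Fin k → ℕ} (i : ∀ l, Fin (v l + 1)) :
    ∀ l, Fin ((v l - (i l : ℕ)) + 1) →o Fin (v l + 1) := fun l =>
  ⟨fun m => ⟨(m : ℕ) + (i l : ℕ), by have h1 := m.isLt; have h2 := (i l).isLt; omega⟩,
    fun a b h => Nat.add_le_add_right h _⟩

/-- The Alexander–Whitney sign `(-1)^{Σ_{l<h} i_h (a_l - i_l)}`. -/
def awSign (v : Fin k → ℕ) (i : ∀ l, Fin (v l + 1)) : ℤ :=
  (-1) ^ (∑ p ∈ Finset.univ.filter (fun p : Fin k × Fin k => p.1 < p.2),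
    (i p.2 : ℕ) * (v p.1 - (i p.1 : ℕ)))

namespace MSSet

variable (K : MSSet k)

variable (R) in
/-- The multisimplicial Alexander–Whitney map
`AW(x) = Σ_i (-1)^{Σ_{l<h} i_h (a_l - i_l)} x⌋_{(i₁,...,i_k)} ⊗ _{(a-i)}⌊x`. -/
def AWm : K.ch R →ₗ[R] (K.ch R ⊗[R] K.ch R) :=
  DirectSum.toModule R _ _ fun v =>
    Finsupp.linearCombination R fun x =>
      ∑ i : ∀ l, Fin (v l + 1),
        awSign v i •
          (K.gen R (fun l => (i l : ℕ)) (K.map (frontFam i) x) ⊗ₜ[R]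
            K.gen R (fun l => v l - (i l : ℕ)) (K.map (backFam i) x))

variable (R) in
/-- The chain complex of the diagonal simplicial set `K^D`. -/
abbrev chD := ⨁ n : ℕ, (K.X (fun _ => n) →₀ R)

variable (R) in
/-- The generator of `C_*(K^D; R)` corresponding to a diagonal simplex. -/
def genD (n : ℕ) (x : K.X (fun _ => n)) : K.chD R :=
  DirectSum.lof R ℕ (fun n => K.X (fun _ => n) →₀ R) n (Finsupp.single x 1)

variable (R) in
/-- The simplicial differential on `C_*(K^D; R)`. -/
def delD : K.chD R →ₗ[R] K.chD R :=
  DirectSum.toModule R _ (K.chD R) fun n =>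
    match n with
    | 0 => 0
    | m + 1 =>
      ∑ t : Fin (m + 2),
        ((-1 : ℤ) ^ (t : ℕ)) •
          ((DirectSum.lof R ℕ (fun n => K.X (fun _ => n) →₀ R) m) ∘ₗ
            Finsupp.lmapDomain R R (fun x => K.map (fun _ => δmap m t) x))

variable (R) in
/-- The Eilenberg–Zilber map `C_*(K; R) → C_*(K^D; R)` as a sum over shuffles
(lattice paths) with signs. -/
def EZ : K.ch R →ₗ[R] K.chD R :=
  DirectSum.toModule R _ (K.chD R) fun v =>
    ∑ c : Paths v,
      pathSign c •
        ((DirectSum.lof R ℕ (fun n => K.X (fun _ => n) →₀ R) (∑ l, v l)) ∘ₗ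
          Finsupp.lmapDomain R R (fun x => K.map (fun l => pathFam v c l) x))

variable (R) in
/-- The classical (simplicial) Alexander–Whitney map on the diagonal,
`AW(y) = Σ_{i=0}^n y⌋_i ⊗ _{n-i}⌊y`. -/
def AWD : K.chD R →ₗ[R] (K.chD R ⊗[R] K.chD R) :=
  DirectSum.toModule R _ _ fun n =>
    Finsupp.linearCombination R fun x =>
      ∑ i : Fin (n + 1),
        (K.genD R (i : ℕ)
            (K.map (fun _ => (⟨fun m => ⟨(m : ℕ), by have := m.isLt; have := i.isLt; omega⟩,
              fun a b h => h⟩ : Fin ((i : ℕ) + 1) →o Fin (n + 1))) x) ⊗ₜ[R]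
          K.genD R (n - (i : ℕ))
            (K.map (fun _ => (⟨fun m => ⟨(m : ℕ) + (i : ℕ), by have := m.isLt; omega⟩,
              fun a b h => Nat.add_le_add_right h _⟩ : Fin ((n - (i : ℕ)) + 1) →o Fin (n + 1))) x))

end MSSet


section AWcoassoc

lemma MSSet.map_map (K : MSSet k) {u v w : Fin k → ℕ}
    (f : ∀ l, Fin (u l + 1) →o Fin (v l + 1)) (g : ∀ l, Fin (v l + 1) →o Fin (w l + 1))
    (x : K.X w) :
    K.map f (K.map g x) = K.map (fun l => (g l).comp (f l)) x :=
  (K.map_comp f g x).symm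

lemma MSSet.gen_map_congr (K : MSSet k) {v : Fin k → ℕ} {w₁ w₂ : Fin k → ℕ} (h : w₁ = w₂)
    (f₁ : ∀ l, Fin (w₁ l + 1) →o Fin (v l + 1)) (f₂ : ∀ l, Fin (w₂ l + 1) →o Fin (v l + 1))
    (hf : ∀ l (m : ℕ) (h₁ : m < w₁ l + 1) (h₂ : m < w₂ l + 1),
      (f₁ l ⟨m, h₁⟩ : ℕ) = (f₂ l ⟨m, h₂⟩ : ℕ))
    (x : K.X v) :
    K.gen R w₁ (K.map f₁ x) = K.gen R w₂ (K.map f₂ x) := by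
  subst h
  have : f₁ = f₂ := by
    funext l
    apply OrderHom.ext
    funext m
    exact Fin.ext (hf l m m.isLt m.isLt)
  rw [this]

lemma MSSet.AWm_gen (K : MSSet k) (v : Fin k → ℕ) (x : K.X v) :
    K.AWm R (K.gen R v x) =
      ∑ i : ∀ l, Fin (v l + 1),
        awSign v i •
          (K.gen R (fun l => (i l : ℕ)) (K.map (frontFam i) x) ⊗ₜ[R]
            K.gen R (fun l => v l - (i l : ℕ)) (K.map (backFam i) x)) := by
  unfold MSSet.AWm MSSet.gen
  rw [DirectSum.toModule_lof, Finsupp.linearCombination_single, one_smul]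

lemma sigma_fin_ext {v : Fin k → ℕ} {w : (∀ l, Fin (v l + 1)) → Fin k → ℕ}
    {p q : Σ a : ∀ l, Fin (v l + 1), ∀ l, Fin (w a l + 1)}
    (h1 : ∀ l, (p.1 l : ℕ) = (q.1 l : ℕ)) (h2 : ∀ l, (p.2 l : ℕ) = (q.2 l : ℕ)) :
    p = q := by
  obtain ⟨a, b⟩ := p
  obtain ⟨c, d⟩ := q
  have hac : a = c := funext fun l => Fin.ext (h1 l)
  subst hac
  rw [show b = d from funext fun l => Fin.ext (h2 l)]

/-- The reindexing bijection for coassociativity of AW. -/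
def awEquiv (v : Fin k → ℕ) :
    (Σ i : ∀ l, Fin (v l + 1), ∀ l, Fin ((i l : ℕ) + 1)) ≃
      (Σ a : ∀ l, Fin (v l + 1), ∀ l, Fin (v l - (a l : ℕ) + 1)) where
  toFun p := ⟨fun l => ⟨(p.2 l : ℕ), by have := (p.2 l).isLt; have := (p.1 l).isLt; omega⟩,
    fun l => show Fin (v l - (p.2 l : ℕ) + 1) from
      ⟨(p.1 l : ℕ) - (p.2 l : ℕ), by have := (p.1 l).isLt; have := (p.2 l).isLt; omega⟩⟩
  invFun p := ⟨fun l => ⟨(p.1 l : ℕ) + (p.2 l : ℕ), by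
      have := (p.1 l).isLt; have := (p.2 l).isLt; omega⟩,
    fun l => show Fin ((p.1 l : ℕ) + (p.2 l : ℕ) + 1) from
      ⟨(p.1 l : ℕ), by omega⟩⟩
  left_inv := by
    rintro ⟨i, j⟩
    refine sigma_fin_ext (w := fun i l => (i l : ℕ)) (fun l => ?_) (fun l => ?_)
    · show (j l : ℕ) + ((i l : ℕ) - (j l : ℕ)) = (i l : ℕ)
      have := (j l).isLt; omega
    · rfl
  right_inv := by
    rintro ⟨a, b⟩
    refine sigma_fin_ext (w := fun a l => v l - (a l : ℕ)) (fun l => ?_) (fun l => ?_)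
    · rfl
    · show (a l : ℕ) + (b l : ℕ) - (a l : ℕ) = (b l : ℕ)
      omega

lemma awSign_mul (v : Fin k → ℕ) (i : ∀ l, Fin (v l + 1)) (j : ∀ l, Fin ((i l : ℕ) + 1)) :
    awSign v i * awSign (fun l => (i l : ℕ)) j =
      awSign v ((awEquiv v ⟨i, j⟩).1) *
        awSign (fun l => v l - (((awEquiv v ⟨i, j⟩).1 l : ℕ))) ((awEquiv v ⟨i, j⟩).2) := by
  unfold awSign
  rw [← pow_add, ← pow_add, ← Finset.sum_add_distrib, ← Finset.sum_add_distrib]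
  congr 1
  apply Finset.sum_congr rfl
  intro p _
  have h1 : (j p.1 : ℕ) ≤ (i p.1 : ℕ) := by have := (j p.1).isLt; omega
  have h2 : (i p.1 : ℕ) ≤ v p.1 := by have := (i p.1).isLt; omega
  have h3 : (j p.2 : ℕ) ≤ (i p.2 : ℕ) := by have := (j p.2).isLt; omega
  have h4 : (i p.2 : ℕ) ≤ v p.2 := by have := (i p.2).isLt; omega
  show (i p.2 : ℕ) * (v p.1 - (i p.1 : ℕ)) + (j p.2 : ℕ) * ((i p.1 : ℕ) - (j p.1 : ℕ)) =
    (j p.2 : ℕ) * (v p.1 - (j p.1 : ℕ)) +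
      ((i p.2 : ℕ) - (j p.2 : ℕ)) * ((v p.1 - (j p.1 : ℕ)) - ((i p.1 : ℕ) - (j p.1 : ℕ)))
  have h5 : (i p.1 : ℕ) - (j p.1 : ℕ) ≤ v p.1 - (j p.1 : ℕ) := by omega
  have h6 : (j p.1 : ℕ) ≤ v p.1 := le_trans h1 h2
  zify [h1, h2, h3, h4, h5, h6]
  ring

end AWcoassoc

set_option maxHeartbeats 1000000 in
set_option synthInstance.maxHeartbeats 1000000 in
/-- The multisimplicial Alexander–Whitney map is coassociative:
`(AW ⊗ id) ∘ AW = (id ⊗ AW) ∘ AW` (up to the associator of the tensor product). -/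
theorem AWm_coassoc (K : MSSet k) :
    (TensorProduct.assoc R (K.ch R) (K.ch R) (K.ch R)).toLinearMap ∘ₗ
        (TensorProduct.map (K.AWm R) LinearMap.id) ∘ₗ K.AWm R =
      (TensorProduct.map LinearMap.id (K.AWm R)) ∘ₗ K.AWm R := by
  apply DirectSum.linearMap_ext
  intro v
  apply Finsupp.lhom_ext
  intro x r
  have hr : (Finsupp.single x r : K.X v →₀ R) = r • Finsupp.single x 1 := by
    rw [Finsupp.smul_single, smul_eq_mul, mul_one]
  simp only [LinearMap.comp_apply, hr, map_smul]
  congr 1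
  change (TensorProduct.assoc R _ _ _).toLinearMap
      (TensorProduct.map (K.AWm R) LinearMap.id (K.AWm R (K.gen R v x))) =
    TensorProduct.map LinearMap.id (K.AWm R) (K.AWm R (K.gen R v x))
  rw [MSSet.AWm_gen]
  simp only [map_sum, LinearMap.map_smul_of_tower, TensorProduct.map_tmul,
    LinearMap.id_apply, MSSet.AWm_gen, TensorProduct.sum_tmul, TensorProduct.tmul_sum,
    ← TensorProduct.smul_tmul', TensorProduct.tmul_smul, Finset.smul_sum, LinearEquiv.coe_coe,
    TensorProduct.assoc_tmul, smul_smul]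
  rw [Finset.sum_sigma' Finset.univ (fun _ => Finset.univ),
    Finset.sum_sigma' Finset.univ (fun _ => Finset.univ)]
  rw [show (Finset.univ.sigma fun (i : ∀ l, Fin (v l + 1)) =>
      (Finset.univ : Finset (∀ l, Fin ((i l : ℕ) + 1)))) = Finset.univ from
    Finset.univ_sigma_univ,
    show (Finset.univ.sigma fun (a : ∀ l, Fin (v l + 1)) =>
      (Finset.univ : Finset (∀ l, Fin (v l - (a l : ℕ) + 1)))) = Finset.univ from
    Finset.univ_sigma_univ]
  refine Fintype.sum_equiv (awEquiv v) _ _ ?_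
  rintro ⟨i, j⟩
  have e1 : K.gen R (fun l => (j l : ℕ))
        (K.map (frontFam j) (K.map (frontFam i) x)) =
      K.gen R (fun l => (((awEquiv v ⟨i, j⟩).1 l : ℕ)))
        (K.map (frontFam (awEquiv v ⟨i, j⟩).1) x) := by
    rw [K.map_map]
    exact K.gen_map_congr rfl _ _ (fun l m h1 h2 => rfl) x
  have e2 : K.gen R (fun l => (i l : ℕ) - (j l : ℕ))
        (K.map (backFam j) (K.map (frontFam i) x)) =
      K.gen R (fun l => ((awEquiv v ⟨i, j⟩).2 l : ℕ))
        (K.map (frontFam (awEquiv v ⟨i, j⟩).2) (K.map (backFam (awEquiv v ⟨i, j⟩).1) x)) := by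
    rw [K.map_map, K.map_map]
    exact K.gen_map_congr rfl _ _ (fun l m h1 h2 => rfl) x
  have e3 : K.gen R (fun l => v l - (i l : ℕ)) (K.map (backFam i) x) =
      K.gen R (fun l => (v l - ((awEquiv v ⟨i, j⟩).1 l : ℕ)) - ((awEquiv v ⟨i, j⟩).2 l : ℕ))
        (K.map (backFam (awEquiv v ⟨i, j⟩).2) (K.map (backFam (awEquiv v ⟨i, j⟩).1) x)) := by
    rw [K.map_map]
    refine K.gen_map_congr ?_ _ _ (fun l m h1 h2 => ?_) x
    · funext l
      show v l - (i l : ℕ) = (v l - (j l : ℕ)) - ((i l : ℕ) - (j l : ℕ))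
      have := (j l).isLt; have := (i l).isLt; omega
    · show m + (i l : ℕ) = (m + ((i l : ℕ) - (j l : ℕ))) + (j l : ℕ)
      have := (j l).isLt; omega
  rw [e1, e2, e3, awSign_mul]
end
end

section
/- The map tc : Sur(k)^D → WΣ_k, sending an i-simplex s of the diagonal of Sur(k) (a sequence containing each value 1,...,k exactly i+1 times) to the sequence (σ₀,...,σ_i) of permutations, where σ_j is the subsequence of s consisting of the (j+1)-st occurrence of each value, is a well-defined map of simplicial sets (commutes with all faces and degeneracies). -/
/-- `selOcc j s c` extracts from the sequence `s` the subsequence of the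
`(j+1)`-st occurrences of each value, where `c` records how many occurrences of
each value have already been seen.  For `c = 0`, this is the `j`-th permutation
`σ_j` in the Berger–Fresse map `tc`. -/
def selOcc {k : ℕ} (j : ℕ) : List (Fin k) → (Fin k → ℕ) → List (Fin k)
  | [], _ => []
  | x :: xs, c =>
    if c x = j then x :: selOcc j xs (Function.update c x (c x + 1))
    else selOcc j xs (Function.update c x (c x + 1))

/-- `delOcc j s c` deletes from `s` the `(j+1)`-st occurrence of every value:
this is the face `d_j` of the diagonal `Sur(k)^D`. -/
def delOcc {k : ℕ} (j : ℕ) : List (Fin k) → (Fin k → ℕ) → List (Fin k)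
  | [], _ => []
  | x :: xs, c =>
    if c x = j then delOcc j xs (Function.update c x (c x + 1))
    else x :: delOcc j xs (Function.update c x (c x + 1))

/-- `dupOcc j s c` doubles in `s` the `(j+1)`-st occurrence of every value:
this is the degeneracy `s_j` of the diagonal `Sur(k)^D`. -/
def dupOcc {k : ℕ} (j : ℕ) : List (Fin k) → (Fin k → ℕ) → List (Fin k)
  | [], _ => []
  | x :: xs, c =>
    if c x = j then x :: x :: dupOcc j xs (Function.update c x (c x + 1))
    else x :: dupOcc j xs (Function.update c x (c x + 1))

lemma selOcc_count {k : ℕ} (j : ℕ) (s : List (Fin k)) (c : Fin k → ℕ) (l : Fin k) :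
    (selOcc j s c).count l = if c l ≤ j ∧ j < c l + s.count l then 1 else 0 := by
  induction s generalizing c with
  | nil => simp only [selOcc, List.count_nil]; exact (if_neg (by omega)).symm
  | cons x xs ih =>
    rw [selOcc]
    rcases eq_or_ne l x with rfl | hne
    · by_cases hx : c l = j
      · rw [if_pos hx, List.count_cons_self, ih, List.count_cons_self,
          Function.update_self]
        split_ifs <;> omega
      · rw [if_neg hx, ih, List.count_cons_self, Function.update_self]
        split_ifs <;> omega
    · by_cases hx : c x = j
      · rw [if_pos hx, List.count_cons_of_ne hne.symm, ih,
          List.count_cons_of_ne hne.symm, Function.update_of_ne hne]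
      · rw [if_neg hx, ih, List.count_cons_of_ne hne.symm, Function.update_of_ne hne]

lemma sel_del_lt {k m j : ℕ} (hmj : m < j) (s : List (Fin k)) (c₁ c₂ : Fin k → ℕ)
    (h : ∀ x, c₁ x = c₂ x ∨ (m < c₁ x ∧ m < c₂ x)) :
    selOcc m (delOcc j s c₂) c₁ = selOcc m s c₂ := by
  induction s generalizing c₁ c₂ with
  | nil => rfl
  | cons x xs ih =>
    have hsel : c₁ x = m ↔ c₂ x = m := by rcases h x with h' | h' <;> omega
    rw [delOcc]
    by_cases h2 : c₂ x = j
    · rw [if_pos h2]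
      rw [show selOcc m (x :: xs) c₂ = selOcc m xs (Function.update c₂ x (c₂ x + 1)) by
        rw [selOcc, if_neg (by omega)]]
      apply ih
      intro y
      rcases eq_or_ne y x with rfl | hy
      · rw [Function.update_self]; rcases h y with h' | h' <;> omega
      · rw [Function.update_of_ne hy]; exact h y
    · rw [if_neg h2]
      have hrel : ∀ y, Function.update c₁ x (c₁ x + 1) y = Function.update c₂ x (c₂ x + 1) y ∨
          (m < Function.update c₁ x (c₁ x + 1) y ∧ m < Function.update c₂ x (c₂ x + 1) y) := by
        intro y
        rcases eq_or_ne y x with rfl | hy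
        · rw [Function.update_self, Function.update_self]
          rcases h y with h' | h' <;> omega
        · rw [Function.update_of_ne hy, Function.update_of_ne hy]; exact h y
      by_cases h1 : c₁ x = m
      · rw [selOcc, if_pos h1, selOcc, if_pos (hsel.mp h1), ih _ _ hrel]
      · rw [selOcc, if_neg h1, selOcc, if_neg (fun hh => h1 (hsel.mpr hh)), ih _ _ hrel]

lemma sel_del_ge {k m j : ℕ} (hmj : j ≤ m) (s : List (Fin k)) (c₁ c₂ : Fin k → ℕ)
    (h : ∀ x, (c₂ x ≤ j ∧ c₁ x = c₂ x) ∨ (j < c₂ x ∧ c₁ x + 1 = c₂ x)) :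
    selOcc m (delOcc j s c₂) c₁ = selOcc (m + 1) s c₂ := by
  induction s generalizing c₁ c₂ with
  | nil => rfl
  | cons x xs ih =>
    rw [delOcc]
    by_cases h2 : c₂ x = j
    · rw [if_pos h2]
      rw [show selOcc (m+1) (x :: xs) c₂ = selOcc (m+1) xs (Function.update c₂ x (c₂ x + 1)) by
        rw [selOcc, if_neg (by omega)]]
      apply ih
      intro y
      rcases eq_or_ne y x with rfl | hy
      · rw [Function.update_self]; rcases h y with h' | h' <;> omega
      · rw [Function.update_of_ne hy]; exact h y
    · rw [if_neg h2]
      have hrel : ∀ y, (Function.update c₂ x (c₂ x + 1) y ≤ j ∧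
            Function.update c₁ x (c₁ x + 1) y = Function.update c₂ x (c₂ x + 1) y) ∨
          (j < Function.update c₂ x (c₂ x + 1) y ∧
            Function.update c₁ x (c₁ x + 1) y + 1 = Function.update c₂ x (c₂ x + 1) y) := by
        intro y
        rcases eq_or_ne y x with rfl | hy
        · rw [Function.update_self, Function.update_self]
          rcases h y with h' | h' <;> omega
        · rw [Function.update_of_ne hy, Function.update_of_ne hy]; exact h y
      have hsel : c₁ x = m ↔ c₂ x = m + 1 := by rcases h x with h' | h' <;> omega
      by_cases h1 : c₁ x = m
      · rw [selOcc, if_pos h1, selOcc, if_pos (hsel.mp h1), ih _ _ hrel]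
      · rw [selOcc, if_neg h1, selOcc, if_neg (fun hh => h1 (hsel.mpr hh)), ih _ _ hrel]

lemma sel_dup_le {k m j : ℕ} (hmj : m ≤ j) (s : List (Fin k)) (c₁ c₂ : Fin k → ℕ)
    (h : ∀ x, (c₂ x ≤ j ∧ c₁ x = c₂ x) ∨ (j < c₂ x ∧ c₁ x = c₂ x + 1)) :
    selOcc m (dupOcc j s c₂) c₁ = selOcc m s c₂ := by
  induction s generalizing c₁ c₂ with
  | nil => rfl
  | cons x xs ih =>
    have hsel : c₁ x = m ↔ c₂ x = m := by rcases h x with h' | h' <;> omega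
    rw [dupOcc]
    by_cases h2 : c₂ x = j
    · rw [if_pos h2]
      have hrel : ∀ y, (Function.update c₂ x (c₂ x + 1) y ≤ j ∧
            Function.update (Function.update c₁ x (c₁ x + 1)) x
              (c₁ x + 1 + 1) y = Function.update c₂ x (c₂ x + 1) y) ∨
          (j < Function.update c₂ x (c₂ x + 1) y ∧
            Function.update (Function.update c₁ x (c₁ x + 1)) x
              (c₁ x + 1 + 1) y = Function.update c₂ x (c₂ x + 1) y + 1) := by
        intro y
        rcases eq_or_ne y x with rfl | hy
        · simp only [Function.update_self]
          rcases h y with h' | h' <;> omega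
        · simp only [Function.update_of_ne hy]; exact h y
      by_cases h1 : c₁ x = m
      · -- m = j, select first x, skip second
        have hm : m = j := by rcases h x with h' | h' <;> omega
        rw [selOcc, if_pos h1, selOcc, Function.update_self,
          if_neg (by omega), selOcc, if_pos (hsel.mp h1), ih _ _ hrel]
      · -- m < j: skip both x's
        rw [selOcc, if_neg h1, selOcc, Function.update_self,
          if_neg (by rcases h x with h' | h' <;> omega), selOcc,
          if_neg (fun hh => h1 (hsel.mpr hh)), ih _ _ hrel]
    · rw [if_neg h2]
      have hrel : ∀ y, (Function.update c₂ x (c₂ x + 1) y ≤ j ∧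
            Function.update c₁ x (c₁ x + 1) y = Function.update c₂ x (c₂ x + 1) y) ∨
          (j < Function.update c₂ x (c₂ x + 1) y ∧
            Function.update c₁ x (c₁ x + 1) y = Function.update c₂ x (c₂ x + 1) y + 1) := by
        intro y
        rcases eq_or_ne y x with rfl | hy
        · simp only [Function.update_self]
          rcases h y with h' | h' <;> omega
        · simp only [Function.update_of_ne hy]; exact h y
      by_cases h1 : c₁ x = m
      · rw [selOcc, if_pos h1, selOcc, if_pos (hsel.mp h1), ih _ _ hrel]
      · rw [selOcc, if_neg h1, selOcc, if_neg (fun hh => h1 (hsel.mpr hh)), ih _ _ hrel]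

lemma sel_dup_gt {k m j : ℕ} (hmj : j ≤ m) (s : List (Fin k)) (c₁ c₂ : Fin k → ℕ)
    (h : ∀ x, (c₂ x ≤ j ∧ c₁ x = c₂ x) ∨ (j < c₂ x ∧ c₁ x = c₂ x + 1)) :
    selOcc (m + 1) (dupOcc j s c₂) c₁ = selOcc m s c₂ := by
  induction s generalizing c₁ c₂ with
  | nil => rfl
  | cons x xs ih =>
    rw [dupOcc]
    by_cases h2 : c₂ x = j
    · rw [if_pos h2]
      have hrel : ∀ y, (Function.update c₂ x (c₂ x + 1) y ≤ j ∧
            Function.update (Function.update c₁ x (c₁ x + 1)) x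
              (c₁ x + 1 + 1) y = Function.update c₂ x (c₂ x + 1) y) ∨
          (j < Function.update c₂ x (c₂ x + 1) y ∧
            Function.update (Function.update c₁ x (c₁ x + 1)) x
              (c₁ x + 1 + 1) y = Function.update c₂ x (c₂ x + 1) y + 1) := by
        intro y
        rcases eq_or_ne y x with rfl | hy
        · simp only [Function.update_self]
          rcases h y with h' | h' <;> omega
        · simp only [Function.update_of_ne hy]; exact h y
      have hc1 : c₁ x = j := by rcases h x with h' | h' <;> omega
      by_cases hm : j = m
      · -- skip first x, select second
        rw [selOcc, if_neg (by omega), selOcc, Function.update_self,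
          if_pos (by omega), selOcc, if_pos (by omega), ih _ _ hrel]
      · -- j < m: skip both, skip on RHS
        rw [selOcc, if_neg (by omega), selOcc, Function.update_self,
          if_neg (by omega), selOcc, if_neg (by omega), ih _ _ hrel]
    · rw [if_neg h2]
      have hsel : c₁ x = m + 1 ↔ c₂ x = m := by rcases h x with h' | h' <;> omega
      have hrel : ∀ y, (Function.update c₂ x (c₂ x + 1) y ≤ j ∧
            Function.update c₁ x (c₁ x + 1) y = Function.update c₂ x (c₂ x + 1) y) ∨
          (j < Function.update c₂ x (c₂ x + 1) y ∧
            Function.update c₁ x (c₁ x + 1) y = Function.update c₂ x (c₂ x + 1) y + 1) := by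
        intro y
        rcases eq_or_ne y x with rfl | hy
        · simp only [Function.update_self]
          rcases h y with h' | h' <;> omega
        · simp only [Function.update_of_ne hy]; exact h y
      by_cases h1 : c₁ x = m + 1
      · rw [selOcc, if_pos h1, selOcc, if_pos (hsel.mp h1), ih _ _ hrel]
      · rw [selOcc, if_neg h1, selOcc, if_neg (fun hh => h1 (hsel.mpr hh)), ih _ _ hrel]

/-- The map `tc : Sur(k)^D → WΣ_k` sending an `i`-simplex `s` of the diagonal of
`Sur(k)` (a sequence containing each value exactly `i+1` times) to the tuple of
permutations `(σ_0, ..., σ_i)`, where `σ_j = selOcc j s 0` is the subsequence of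
`(j+1)`-st occurrences, is a well-defined simplicial map: each `σ_j` is a
permutation word (no duplicates, length `k`), and `tc` commutes with all faces
`d_j` and degeneracies `s_j` (which on the Barratt–Eccles side remove,
respectively double, the `(j+1)`-st permutation). -/
theorem tc_simplicial_map (k i : ℕ) (s : List (Fin k))
    (hs : ∀ l : Fin k, s.count l = i + 1) :
    (∀ j ≤ i, (selOcc j s (fun _ => 0)).Nodup ∧ (selOcc j s (fun _ => 0)).length = k) ∧
    (∀ j ≤ i, ∀ m : ℕ,
      (m < j → selOcc m (delOcc j s (fun _ => 0)) (fun _ => 0) = selOcc m s (fun _ => 0)) ∧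
      (j ≤ m → selOcc m (delOcc j s (fun _ => 0)) (fun _ => 0) = selOcc (m + 1) s (fun _ => 0))) ∧
    (∀ j ≤ i, ∀ m : ℕ,
      (m ≤ j → selOcc m (dupOcc j s (fun _ => 0)) (fun _ => 0) = selOcc m s (fun _ => 0)) ∧
      (j < m → selOcc m (dupOcc j s (fun _ => 0)) (fun _ => 0) = selOcc (m - 1) s (fun _ => 0))) := by
  refine ⟨?_, ?_, ?_⟩
  · intro j hj
    have hcount : ∀ l : Fin k, (selOcc j s (fun _ => 0)).count l = 1 := by
      intro l
      rw [selOcc_count, if_pos ⟨Nat.zero_le _, by rw [hs l]; omega⟩]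
    constructor
    · rw [List.nodup_iff_count_le_one]
      intro a; rw [hcount a]
    · have h1 : ∑ a : Fin k, (selOcc j s (fun _ => 0) : Multiset (Fin k)).count a =
          Multiset.card (selOcc j s (fun _ => 0) : Multiset (Fin k)) := by
        rw [← Multiset.toFinset_sum_count_eq]
        exact (Finset.sum_subset (Finset.subset_univ _) (fun x _ hx =>
          Multiset.count_eq_zero.mpr (by simpa using hx))).symm
      have h2 : ∀ a : Fin k, (selOcc j s (fun _ => 0) : Multiset (Fin k)).count a = 1 := by
        intro a; rw [Multiset.coe_count, hcount a]
      simp only [h2, Finset.sum_const, smul_eq_mul, mul_one, Finset.card_univ,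
        Fintype.card_fin, Multiset.coe_card] at h1
      simpa using h1.symm
  · intro j _ m
    refine ⟨fun hm => sel_del_lt hm s _ _ (fun x => Or.inl rfl),
      fun hm => sel_del_ge hm s _ _ (fun x => Or.inl ⟨Nat.zero_le _, rfl⟩)⟩
  · intro j _ m
    refine ⟨fun hm => sel_dup_le hm s _ _ (fun x => Or.inl ⟨Nat.zero_le _, rfl⟩), ?_⟩
    intro hm
    obtain ⟨m', rfl⟩ : ∃ m', m = m' + 1 := ⟨m - 1, by omega⟩
    simpa using sel_dup_gt (by omega) s _ _ (fun x => Or.inl ⟨Nat.zero_le _, rfl⟩)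
end
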